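/- Let φ be an increasing submodular setfunction on a sigma-algebra (J, B) that is continuous from above (for every decreasing sequence Aₙ with intersection A, φ(Aₙ) → φ(A)). Then the Björner pseudometric d(X, Y) = 2φ(X ∪ Y) − φ(X) − φ(Y) is complete: every Cauchy sequence of sets in B converges in d to some set in B. -/
import Mathlib

open Filter Set

private def pU {J : Type*} (Y : ℕ → Set J) (N : ℕ) : ℕ → Set J
  | 0 => Y N
  | m + 1 => pU Y N m ∪ Y (N + m + 1)

private lemma pU_meas {J : Type*} [MeasurableSpace J] {Y : ℕ → Set J}
    (h : ∀ n, MeasurableSet (Y n)) (N m : ℕ) : MeasurableSet (pU Y N m) := by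
  induction m with
  | zero => exact h N
  | succ m ih => exact ih.union (h _)

private lemma subset_pU_self {J : Type*} (Y : ℕ → Set J) (N m : ℕ) :
    Y (N + m) ⊆ pU Y N m := by
  induction m with
  | zero => exact subset_rfl
  | succ m ih => exact subset_union_right

private lemma pU_subset_iUnion {J : Type*} (Y : ℕ → Set J) (N m : ℕ) :
    pU Y N m ⊆ ⋃ k, Y (N + k) := by
  induction m with
  | zero => exact subset_iUnion (fun k => Y (N + k)) 0
  | succ m ih => exact union_subset ih (subset_iUnion (fun k => Y (N + k)) (m + 1))

private lemma pU_mono {J : Type*} (Y : ℕ → Set J) (N m : ℕ) :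
    pU Y N m ⊆ pU Y N (m + 1) := subset_union_left

theorem stmt_19 {J : Type*} [MeasurableSpace J] (φ : Set J → ℝ)
    (hmono : ∀ X Y : Set J, MeasurableSet X → MeasurableSet Y → X ⊆ Y → φ X ≤ φ Y)
    (hsub : ∀ X Y : Set J, MeasurableSet X → MeasurableSet Y →
      φ (X ∪ Y) + φ (X ∩ Y) ≤ φ X + φ Y)
    (hcont : ∀ A : ℕ → Set J, (∀ n, MeasurableSet (A n)) → Antitone A →
      Filter.Tendsto (fun n => φ (A n)) Filter.atTop (nhds (φ (⋂ n, A n))))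
    (d : Set J → Set J → ℝ)
    (hd : ∀ X Y : Set J, d X Y = 2 * φ (X ∪ Y) - φ X - φ Y)
    (X : ℕ → Set J) (hXmeas : ∀ n, MeasurableSet (X n))
    (hcauchy : ∀ ε : ℝ, 0 < ε → ∃ N : ℕ, ∀ m ≥ N, ∀ n ≥ N, d (X m) (X n) < ε) :
    ∃ Z : Set J, MeasurableSet Z ∧
      Filter.Tendsto (fun n => d (X n) Z) Filter.atTop (nhds 0) := by
  -- basic facts about d
  have hd0 : ∀ A B : Set J, MeasurableSet A → MeasurableSet B → 0 ≤ d A B := by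
    intro A B hA hB
    have h1 := hmono A (A ∪ B) hA (hA.union hB) subset_union_left
    have h2 := hmono B (A ∪ B) hB (hA.union hB) subset_union_right
    rw [hd]; linarith
  have htri : ∀ A B C : Set J, MeasurableSet A → MeasurableSet B → MeasurableSet C →
      d A C ≤ d A B + d B C := by
    intro A B C hA hB hC
    have h1 := hsub (A ∪ B) (B ∪ C) (hA.union hB) (hB.union hC)
    have h2 := hmono B ((A ∪ B) ∩ (B ∪ C)) hB ((hA.union hB).inter (hB.union hC))
      (subset_inter subset_union_right subset_union_left)
    have h3 := hmono (A ∪ C) ((A ∪ B) ∪ (B ∪ C)) (hA.union hC)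
      ((hA.union hB).union (hB.union hC))
      (union_subset_union subset_union_left subset_union_right)
    rw [hd, hd, hd]; linarith
  have hdsub : ∀ A B : Set J, A ⊆ B → d A B = φ B - φ A := by
    intro A B hAB
    rw [hd, union_eq_self_of_subset_left hAB]; ring
  have hdsymm : ∀ A B : Set J, d A B = d B A := by
    intro A B; rw [hd, hd, union_comm]; ring
  -- fast Cauchy subsequence
  choose Nc hNc using fun k : ℕ => hcauchy ((1 / 2 : ℝ) ^ k) (by positivity)
  set f : ℕ → ℕ := fun k => (Finset.range (k + 1)).sup Nc + k with hf
  have hfN : ∀ j k : ℕ, j ≤ k → Nc j ≤ f k := by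
    intro j k hjk
    exact le_trans (Finset.le_sup (Finset.mem_range.2 (by omega))) (Nat.le_add_right _ _)
  have hfk : ∀ k, k ≤ f k := fun k => Nat.le_add_left k _
  set Y : ℕ → Set J := fun k => X (f k) with hY
  have hYm : ∀ k, MeasurableSet (Y k) := fun k => hXmeas (f k)
  have hYd : ∀ k, d (Y k) (Y (k + 1)) < (1 / 2 : ℝ) ^ k := fun k =>
    hNc k (f k) (hfN k k le_rfl) (f (k + 1)) (hfN k (k + 1) (Nat.le_succ k))
  -- partial union bound
  have hUb : ∀ N m : ℕ, φ (pU Y N m) ≤ φ (Y N) + 2 * (1 / 2 : ℝ) ^ N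
      - 2 * (1 / 2 : ℝ) ^ (N + m) := by
    intro N m
    induction m with
    | zero => simp [pU]
    | succ m ih =>
      -- submodular step
      have hBA : Y (N + m) ⊆ pU Y N m := subset_pU_self Y N m
      have h1 := hsub (pU Y N m) (Y (N + m) ∪ Y (N + m + 1)) (pU_meas hYm N m)
        ((hYm _).union (hYm _))
      have h2 : pU Y N m ∪ (Y (N + m) ∪ Y (N + m + 1)) = pU Y N (m + 1) := by
        show _ = pU Y N m ∪ Y (N + m + 1)
        rw [← union_assoc, union_eq_self_of_subset_right hBA]
      have h3 := hmono (Y (N + m)) (pU Y N m ∩ (Y (N + m) ∪ Y (N + m + 1))) (hYm _)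
        ((pU_meas hYm N m).inter ((hYm _).union (hYm _)))
        (subset_inter hBA subset_union_left)
      have hdm := hYd (N + m)
      rw [hd] at hdm
      have hφC : φ (Y (N + m + 1)) ≤ φ (Y (N + m) ∪ Y (N + m + 1)) :=
        hmono _ _ (hYm _) ((hYm _).union (hYm _)) subset_union_right
      have hp : (2 : ℝ) * (1 / 2 : ℝ) ^ (N + (m + 1)) = (1 / 2 : ℝ) ^ (N + m) := by
        rw [show N + (m + 1) = (N + m) + 1 by omega, pow_succ]; ring
      rw [h2] at h1
      show φ (pU Y N (m + 1)) ≤ _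
      linarith
  -- tail unions
  set V : ℕ → Set J := fun N => ⋃ k, Y (N + k) with hV
  have hVm : ∀ N, MeasurableSet (V N) := fun N => MeasurableSet.iUnion fun k => hYm _
  have hYV : ∀ N, Y N ⊆ V N := fun N => subset_iUnion (fun k => Y (N + k)) 0
  have hpUV : ∀ N m, pU Y N m ⊆ V N := fun N m => pU_subset_iUnion Y N m
  have hVb : ∀ N, φ (V N) ≤ φ (Y N) + 2 * (1 / 2 : ℝ) ^ N := by
    intro N
    set A : ℕ → Set J := fun m => V N \ pU Y N m with hA
    have hAm : ∀ m, MeasurableSet (A m) := fun m => (hVm N).diff (pU_meas hYm N m)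
    have hAanti : Antitone A := by
      apply antitone_nat_of_succ_le
      intro m
      exact diff_subset_diff_right (pU_mono Y N m)
    have hAint : (⋂ m, A m) = ∅ := by
      apply eq_empty_iff_forall_notMem.2
      intro x hx
      have hxV : x ∈ V N := (mem_iInter.1 hx 0).1
      obtain ⟨k, hk⟩ : ∃ k, x ∈ Y (N + k) := by
        simpa [hV, mem_iUnion] using hxV
      exact (mem_iInter.1 hx k).2 (subset_pU_self Y N k hk)
    have hcA := hcont A hAm hAanti
    rw [hAint] at hcA
    have hkey : ∀ m, φ (V N) + φ (∅ : Set J) ≤ φ (pU Y N m) + φ (A m) := by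
      intro m
      have h1 := hsub (pU Y N m) (A m) (pU_meas hYm N m) (hAm m)
      have h2 : pU Y N m ∪ A m = V N := by
        rw [hA]
        exact union_diff_cancel (hpUV N m)
      have h3 : pU Y N m ∩ A m = ∅ := by
        rw [hA]
        ext x
        simp only [mem_inter_iff, mem_diff, mem_empty_iff_false, iff_false]
        tauto
      rw [h2, h3] at h1; linarith
    have hlim : Tendsto (fun m => φ (Y N) + 2 * (1 / 2 : ℝ) ^ N + (φ (A m) - φ (∅ : Set J)))
        atTop (nhds (φ (Y N) + 2 * (1 / 2 : ℝ) ^ N)) := by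
      have hc : Tendsto (fun _ : ℕ => φ (Y N) + 2 * (1 / 2 : ℝ) ^ N) atTop
          (nhds (φ (Y N) + 2 * (1 / 2 : ℝ) ^ N)) := tendsto_const_nhds
      have := hc.add (hcA.sub (tendsto_const_nhds (x := φ (∅ : Set J))))
      simpa using this
    refine ge_of_tendsto' hlim ?_
    intro m
    have h4 := hkey m
    have h5 := hUb N m
    have h6 : (0 : ℝ) ≤ (1 / 2 : ℝ) ^ (N + m) := by positivity
    linarith
  -- the limit set
  have hVanti : Antitone V := by
    apply antitone_nat_of_succ_le
    intro N x hx
    obtain ⟨k, hk⟩ : ∃ k, x ∈ Y (N + 1 + k) := by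
      simpa [hV, mem_iUnion] using hx
    have he : N + 1 + k = N + (k + 1) := by omega
    rw [he] at hk
    exact mem_iUnion.2 ⟨k + 1, hk⟩
  set Z : Set J := ⋂ N, V N with hZ
  have hZm : MeasurableSet Z := MeasurableSet.iInter fun N => hVm N
  have hZV : ∀ N, Z ⊆ V N := fun N => iInter_subset _ N
  have hcV := hcont V hVm hVanti
  rw [← hZ] at hcV
  have hdYZ : ∀ N, d (Y N) Z ≤ 2 * (1 / 2 : ℝ) ^ N + (φ (V N) - φ Z) := by
    intro N
    have h1 := htri (Y N) (V N) Z (hYm N) (hVm N) hZm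
    have h2 : d (Y N) (V N) = φ (V N) - φ (Y N) := hdsub _ _ (hYV N)
    have h3 : d (V N) Z = φ (V N) - φ Z := by
      rw [hdsymm]; exact hdsub _ _ (hZV N)
    have h4 := hVb N
    linarith
  have hYZ0 : Tendsto (fun N => d (Y N) Z) atTop (nhds 0) := by
    apply squeeze_zero (fun N => hd0 _ _ (hYm N) hZm) hdYZ
    have hpow : Tendsto (fun N : ℕ => (1 / 2 : ℝ) ^ N) atTop (nhds 0) := by
      apply tendsto_pow_atTop_nhds_zero_of_lt_one <;> norm_num
    have := (hpow.const_mul 2).add (hcV.sub (tendsto_const_nhds (x := φ Z)))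
    simpa using this
  refine ⟨Z, hZm, ?_⟩
  rw [Metric.tendsto_atTop]
  intro ε hε
  obtain ⟨N₀, hN₀⟩ := hcauchy (ε / 2) (by linarith)
  obtain ⟨K₀, hK₀⟩ := Metric.tendsto_atTop.1 hYZ0 (ε / 2) (by linarith)
  refine ⟨N₀, fun n hn => ?_⟩
  set K := max K₀ N₀ with hK
  have h1 : d (X n) (Y K) < ε / 2 :=
    hN₀ n hn (f K) (le_trans (le_max_right _ _) (hfk K))
  have h2 : d (Y K) Z < ε / 2 := by
    have := hK₀ K (le_max_left _ _)
    rwa [Real.dist_eq, sub_zero, abs_of_nonneg (hd0 _ _ (hYm K) hZm)] at this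
  have h3 := htri (X n) (Y K) Z (hXmeas n) (hYm K) hZm
  rw [Real.dist_eq, sub_zero, abs_of_nonneg (hd0 _ _ (hXmeas n) hZm)]
  linarith
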